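/- The number of orientation-preserving partial isometries of the cycle graph C_n equals n·2^n + n²(n-1)/2 - ((1+(-1)^n)/4)·n² - n + 1. -/

import Mathlib

/-- The cycle-graph distance on `{1,…,n}`. -/
def cycDist (n x y : ℕ) : ℕ :=
  min (max x y - min x y) (n - (max x y - min x y))

/-- `α : ℕ → Option ℕ` (with `α x = some u` meaning `xα = u`) is a partial
isometry of the cycle graph `C_n`: an injective partial map on `{1,…,n}`
preserving the cycle distance. -/
def IsPartialIsometry (n : ℕ) (α : ℕ → Option ℕ) : Prop :=
  (∀ x u, α x = some u → 1 ≤ x ∧ x ≤ n ∧ 1 ≤ u ∧ u ≤ n) ∧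
  (∀ x y u, α x = some u → α y = some u → x = y) ∧
  (∀ x y u v, α x = some u → α y = some v → cycDist n u v = cycDist n x y)

/-- `α` is orientation-preserving: for any strictly increasing enumeration
`a 0 < a 1 < ⋯ < a (t-1)` of its domain, the sequence of images has at most
one cyclic descent. -/
def IsOrientPres (α : ℕ → Option ℕ) : Prop :=
  ∀ (t : ℕ) (a : ℕ → ℕ),
    (∀ p q, p < q → q < t → a p < a q) →
    (∀ p, p < t → α (a p) ≠ none) →
    (∀ x, α x ≠ none → ∃ p, p < t ∧ a p = x) →
    ((Finset.range t).filter
      (fun p => (α (a ((p + 1) % t))).getD 0 < (α (a p)).getD 0)).card ≤ 1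

open Finset

/-- rotation by `c` on points `{1,…,n}` -/
def rotF (n c x : ℕ) : ℕ := if x + c ≤ n then x + c else x + c - n
/-- reflection with parameter `s` on points `{1,…,n}` -/
def reflF (n s x : ℕ) : ℕ := if x ≤ s + 1 then s + 2 - x else s + 2 + n - x

lemma rotF_bound {n c x : ℕ} (hc : c < n) (hx : 1 ≤ x ∧ x ≤ n) :
    1 ≤ rotF n c x ∧ rotF n c x ≤ n := by unfold rotF; split <;> omega

lemma reflF_bound {n s x : ℕ} (hs : s < n) (hx : 1 ≤ x ∧ x ≤ n) :
    1 ≤ reflF n s x ∧ reflF n s x ≤ n := by unfold reflF; split <;> omega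

lemma rotF_inj {n c x y : ℕ} (hc : c < n) (hx : 1 ≤ x ∧ x ≤ n) (hy : 1 ≤ y ∧ y ≤ n)
    (h : rotF n c x = rotF n c y) : x = y := by unfold rotF at h; split_ifs at h <;> omega

lemma reflF_inj {n s x y : ℕ} (hs : s < n) (hx : 1 ≤ x ∧ x ≤ n) (hy : 1 ≤ y ∧ y ≤ n)
    (h : reflF n s x = reflF n s y) : x = y := by unfold reflF at h; split_ifs at h <;> omega

lemma rotF_iso {n c x y : ℕ} (hc : c < n) (hx : 1 ≤ x ∧ x ≤ n) (hy : 1 ≤ y ∧ y ≤ n) :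
    cycDist n (rotF n c x) (rotF n c y) = cycDist n x y := by
  unfold rotF cycDist; split_ifs <;> omega

lemma reflF_iso {n s x y : ℕ} (hs : s < n) (hx : 1 ≤ x ∧ x ≤ n) (hy : 1 ≤ y ∧ y ≤ n) :
    cycDist n (reflF n s x) (reflF n s y) = cycDist n x y := by
  unfold reflF cycDist; split_ifs <;> omega

lemma rot_param_inj {n c c' x : ℕ} (hc : c < n) (hc' : c' < n) (hx : 1 ≤ x ∧ x ≤ n)
    (h : rotF n c x = rotF n c' x) : c = c' := by unfold rotF at h; split_ifs at h <;> omega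

lemma refl_param_inj {n s s' x : ℕ} (hs : s < n) (hs' : s' < n) (hx : 1 ≤ x ∧ x ≤ n)
    (h : reflF n s x = reflF n s' x) : s = s' := by unfold reflF at h; split_ifs at h <;> omega

lemma rot_ne_refl {n c s x y : ℕ} (hc : c < n) (hs : s < n) (hx : 1 ≤ x) (hxy : x < y) (hy : y ≤ n)
    (h1 : rotF n c x = reflF n s x) (h2 : rotF n c y = reflF n s y) : 2 * (y - x) = n := by
  unfold rotF reflF at h1 h2; split_ifs at h1 h2 <;> omega

lemma val_inj_pts {n u v : ℕ} (hn : 0 < n) (hu : 1 ≤ u ∧ u ≤ n) (hv : 1 ≤ v ∧ v ≤ n)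
    (h : (u : ZMod n) = (v : ZMod n)) : u = v := by
  haveI : NeZero n := ⟨by omega⟩
  have h2 : (u : ZMod n).val = (v : ZMod n).val := by rw [h]
  rw [ZMod.val_natCast, ZMod.val_natCast] at h2
  rcases eq_or_lt_of_le hu.2 with rfl | hu'
  · rcases eq_or_lt_of_le hv.2 with rfl | hv'
    · rfl
    · rw [Nat.mod_self, Nat.mod_eq_of_lt hv'] at h2; omega
  · rcases eq_or_lt_of_le hv.2 with rfl | hv'
    · rw [Nat.mod_self, Nat.mod_eq_of_lt hu'] at h2; omega
    · rw [Nat.mod_eq_of_lt hu', Nat.mod_eq_of_lt hv'] at h2; omega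


lemma rotF_cast {n c x : ℕ} (hx : 1 ≤ x ∧ x ≤ n) :
    ((rotF n c x : ℕ) : ZMod n) = (x : ZMod n) + c := by
  unfold rotF; split
  · push_cast; ring
  · rw [Nat.cast_sub (by omega)]; push_cast [ZMod.natCast_self]; ring

lemma reflF_cast {n s x : ℕ} (hx : 1 ≤ x ∧ x ≤ n) :
    ((reflF n s x : ℕ) : ZMod n) = (s : ZMod n) + 2 - x := by
  unfold reflF; split
  · rw [Nat.cast_sub (by omega)]; push_cast; ring
  · rw [Nat.cast_sub (by omega)]; push_cast [ZMod.natCast_self]; ring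

lemma dist_dir {n x y u v : ℕ} (hx : 1 ≤ x ∧ x ≤ n) (hy : 1 ≤ y ∧ y ≤ n)
    (hu : 1 ≤ u ∧ u ≤ n) (hv : 1 ≤ v ∧ v ≤ n)
    (h : cycDist n u v = cycDist n x y) :
    (v : ZMod n) - u = (y : ZMod n) - x ∨ (v : ZMod n) - u = (x : ZMod n) - y := by
  have hcast : ∀ a b : ℕ, 1 ≤ a ∧ a ≤ n → 1 ≤ b ∧ b ≤ n →
      (((if a ≤ b then b - a else b + n - a) : ℕ) : ZMod n) = (b : ZMod n) - a := by
    intro a b ha hb; split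
    · rw [Nat.cast_sub (by omega)]
    · rw [Nat.cast_sub (by omega)]; push_cast [ZMod.natCast_self]; ring
  have hg : ((if u ≤ v then v - u else v + n - u) = (if x ≤ y then y - x else y + n - x)) ∨
      ((if u ≤ v then v - u else v + n - u) + (if x ≤ y then y - x else y + n - x) = n) := by
    unfold cycDist at h; split_ifs <;> omega
  rcases hg with hg | hg
  · left; rw [← hcast u v hu hv, ← hcast x y hx hy, hg]
  · right
    have h5 := congrArg (fun m : ℕ => (m : ZMod n)) hg
    simp only [Nat.cast_add, ZMod.natCast_self] at h5
    rw [hcast u v hu hv, hcast x y hx hy] at h5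
    linear_combination h5

lemma rigid {n : ℕ} {D : Finset ℕ} {g : ℕ → ZMod n}
    (hf : ∀ x ∈ D, ∀ y ∈ D, g y - g x = (y : ZMod n) - x ∨ g y - g x = (x : ZMod n) - y)
    {x y : ℕ} (hx : x ∈ D) (hy : y ∈ D) (h2 : 2 * ((y : ZMod n) - x) ≠ 0) :
    (∀ z ∈ D, g z = g x + ((z : ZMod n) - x)) ∨ (∀ z ∈ D, g z = g x - ((z : ZMod n) - x)) := by
  rcases hf x hx y hy with hxy | hxy
  · left; intro z hz
    rcases hf x hx z hz with h1 | h1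
    · linear_combination h1
    · rcases hf y hy z hz with h3 | h3
      · have h4 : 2 * ((z : ZMod n) - x) = 0 := by linear_combination h1 - h3 - hxy
        linear_combination h1 - h4
      · exact absurd (by linear_combination h1 - h3 - hxy) h2
  · right; intro z hz
    rcases hf x hx z hz with h1 | h1
    · rcases hf y hy z hz with h3 | h3
      · exact absurd (by linear_combination h3 + hxy - h1) h2
      · have h4 : 2 * ((z : ZMod n) - x) = 0 := by linear_combination h3 + hxy - h1
        linear_combination h1 + h4
    · linear_combination h1

lemma rot_orient {n c : ℕ} (t : ℕ) (a : ℕ → ℕ)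
    (hmono : ∀ p q, p < q → q < t → a p < a q)
    (hbd : ∀ p, p < t → 1 ≤ a p ∧ a p ≤ n) :
    ((Finset.range t).filter (fun p => rotF n c (a ((p + 1) % t)) < rotF n c (a p))).card ≤ 1 := by
  have hanti : ∀ p q, p ≤ q → q < t → a q + c ≤ n → a p + c ≤ n := by
    intro p q hpq hq h
    rcases eq_or_lt_of_le hpq with rfl | h'
    · exact h
    · have := hmono p q h' hq; omega
  have step : ∀ p, p + 1 < t →
      (rotF n c (a ((p + 1) % t)) < rotF n c (a p) ↔ (a p + c ≤ n ∧ ¬ a (p + 1) + c ≤ n)) := by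
    intro p hp
    rw [Nat.mod_eq_of_lt hp]
    have h1 := hmono p (p + 1) (by omega) hp
    have h2 := hbd p (by omega)
    have h3 := hbd (p + 1) hp
    unfold rotF; split_ifs <;> omega
  have main : ∀ p q, p < q → q < t →
      rotF n c (a ((p + 1) % t)) < rotF n c (a p) →
      rotF n c (a ((q + 1) % t)) < rotF n c (a q) → False := by
    intro p q hpq hq hdp hdq
    have hp1 : p + 1 < t := by omega
    rw [step p hp1] at hdp
    by_cases hq1 : q + 1 < t
    · rw [step q hq1] at hdq
      exact hdp.2 (hanti (p + 1) q (by omega) (by omega) hdq.1)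
    · have hqe : q = t - 1 := by omega
      have hmod : (q + 1) % t = 0 := by
        have : q + 1 = t := by omega
        rw [this, Nat.mod_self]
      rw [hmod] at hdq
      have hnq : ¬ a q + c ≤ n := fun h => hdp.2 (hanti (p + 1) q (by omega) (by omega) h)
      have h0 : a 0 + c ≤ n := hanti 0 p (by omega) (by omega) hdp.1
      have hb0 := hbd 0 (by omega)
      have hbq := hbd q (by omega)
      unfold rotF at hdq; split_ifs at hdq <;> omega
  rw [Finset.card_le_one]
  intro p hp q hq
  simp only [mem_filter, mem_range] at hp hq
  by_contra hne
  rcases lt_trichotomy p q with h | h | h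
  · exact main p q h hq.1 hp.2 hq.2
  · exact hne h
  · exact main q p h hp.1 hq.2 hp.2

lemma refl_bad {n s : ℕ} (t : ℕ) (a : ℕ → ℕ) (ht : 3 ≤ t)
    (hmono : ∀ p q, p < q → q < t → a p < a q)
    (hbd : ∀ p, p < t → 1 ≤ a p ∧ a p ≤ n) :
    2 ≤ ((Finset.range t).filter
      (fun p => reflF n s (a ((p + 1) % t)) < reflF n s (a p))).card := by
  have step : ∀ p, p + 1 < t →
      (reflF n s (a ((p + 1) % t)) < reflF n s (a p) ↔ (a (p + 1) ≤ s + 1 ∨ ¬ a p ≤ s + 1)) := by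
    intro p hp
    rw [Nat.mod_eq_of_lt hp]
    have h1 := hmono p (p + 1) (by omega) hp
    have h2 := hbd p (by omega)
    have h3 := hbd (p + 1) hp
    unfold reflF; split_ifs <;> omega
  have two_mem : ∀ p1 p2, p1 < t → p2 < t → p1 ≠ p2 →
      reflF n s (a ((p1 + 1) % t)) < reflF n s (a p1) →
      reflF n s (a ((p2 + 1) % t)) < reflF n s (a p2) →
      2 ≤ ((Finset.range t).filter
        (fun p => reflF n s (a ((p + 1) % t)) < reflF n s (a p))).card := by
    intro p1 p2 h1 h2 h3 h4 h5
    rw [Nat.succ_le_iff, Finset.one_lt_card]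
    exact ⟨p1, by simp [h1, h4], p2, by simp [h2, h5], h3⟩
  have h01 := hmono 0 1 (by omega) (by omega)
  have h1t : (1 : ℕ) < t - 1 ∨ 1 = t - 1 := by omega
  by_cases hL : a (t - 1) ≤ s + 1
  · -- all lo : descents at 0 and 1
    have hlo : ∀ p, p < t → a p ≤ s + 1 := by
      intro p hp
      rcases eq_or_lt_of_le (Nat.le_sub_one_of_lt hp) with h | h
      · rw [h]; exact hL
      · have := hmono p (t - 1) (by omega) (by omega); omega
    exact two_mem 0 1 (by omega) (by omega) (by omega)
      ((step 0 (by omega)).2 (Or.inl (hlo 1 (by omega))))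
      ((step 1 (by omega)).2 (Or.inl (hlo 2 (by omega))))
  · by_cases hH : a 0 ≤ s + 1
    · -- wrap descent at t-1, plus an internal one
      have hwrap : reflF n s (a ((t - 1 + 1) % t)) < reflF n s (a (t - 1)) := by
        have hmod : (t - 1 + 1) % t = 0 := by
          have : t - 1 + 1 = t := by omega
          rw [this, Nat.mod_self]
        rw [hmod]
        have hb0 := hbd 0 (by omega)
        have hbq := hbd (t - 1) (by omega)
        unfold reflF; split_ifs <;> omega
      by_cases h1 : a 1 ≤ s + 1
      · exact two_mem 0 (t - 1) (by omega) (by omega) (by omega)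
          ((step 0 (by omega)).2 (Or.inl h1)) hwrap
      · exact two_mem 1 (t - 1) (by omega) (by omega) (by omega)
          ((step 1 (by omega)).2 (Or.inr h1)) hwrap
    · -- all high : descents at 0 and 1
      have hhi : ¬ a 1 ≤ s + 1 := by omega
      exact two_mem 0 1 (by omega) (by omega) (by omega)
        ((step 0 (by omega)).2 (Or.inr hH))
        ((step 1 (by omega)).2 (Or.inr hhi))

/-- every finset has a strictly increasing enumeration -/
lemma sorted_enum (D : Finset ℕ) : ∃ a : ℕ → ℕ,
    (∀ p q, p < q → q < D.card → a p < a q) ∧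
    (∀ p, p < D.card → a p ∈ D) ∧
    (∀ x ∈ D, ∃ p, p < D.card ∧ a p = x) := by
  classical
  let e := D.orderIsoOfFin rfl
  refine ⟨fun p => if h : p < D.card then (e ⟨p, h⟩ : ℕ) else 0, ?_, ?_, ?_⟩
  · intro p q hpq hq
    dsimp only
    rw [dif_pos (by omega), dif_pos hq]
    have := e.strictMono (a := ⟨p, by omega⟩) (b := ⟨q, hq⟩) (by exact hpq)
    exact_mod_cast this
  · intro p hp
    dsimp only
    rw [dif_pos hp]
    exact (e ⟨p, hp⟩).2
  · intro x hx
    obtain ⟨p, hp⟩ := e.surjective ⟨x, hx⟩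
    exact ⟨p.1, p.2, by dsimp only; rw [dif_pos p.2, hp]⟩

def enc0 : ℕ → Option ℕ := fun _ => none
def enc1 (x u : ℕ) : ℕ → Option ℕ := fun z => if z = x then some u else none
def enc2 (n c : ℕ) (D : Finset ℕ) : ℕ → Option ℕ :=
  fun z => if z ∈ D then some (rotF n c z) else none
def enc3 (n s x y : ℕ) : ℕ → Option ℕ :=
  fun z => if z = x ∨ z = y then some (reflF n s z) else none

lemma orient_small (α : ℕ → Option ℕ) :
    ∀ (t : ℕ) (a : ℕ → ℕ), t ≤ 2 →
    ((Finset.range t).filter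
      (fun p => (α (a ((p + 1) % t))).getD 0 < (α (a p)).getD 0)).card ≤ 1 := by
  intro t a ht
  rw [Finset.card_le_one]
  intro p hp q hq
  simp only [mem_filter, mem_range] at hp hq
  by_contra hne
  have ht2 : t = 2 := by omega
  subst ht2
  have hcase : p = 0 ∧ q = 1 ∨ p = 1 ∧ q = 0 := by omega
  rcases hcase with ⟨rfl, rfl⟩ | ⟨rfl, rfl⟩ <;> norm_num at hp hq <;>
    exact absurd hq (lt_asymm hp)

lemma mem0 (n : ℕ) : IsPartialIsometry n enc0 ∧ IsOrientPres enc0 := by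
  refine ⟨⟨fun x u h => by simp [enc0] at h, fun x y u h h' => by simp [enc0] at h,
    fun x y u v h h' => by simp [enc0] at h⟩, ?_⟩
  intro t a hmono hdom hsurj
  have ht : t = 0 := by
    by_contra h
    exact hdom 0 (by omega) rfl
  subst ht; simp

lemma mem1 {n x u : ℕ} (hx : 1 ≤ x ∧ x ≤ n) (hu : 1 ≤ u ∧ u ≤ n) :
    IsPartialIsometry n (enc1 x u) ∧ IsOrientPres (enc1 x u) := by
  have hval : ∀ z v, enc1 x u z = some v → z = x ∧ v = u := by
    intro z v h
    unfold enc1 at h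
    split_ifs at h with h'
    exact ⟨h', (Option.some_inj.1 h).symm⟩
  refine ⟨⟨?_, ?_, ?_⟩, ?_⟩
  · intro z v h; obtain ⟨rfl, rfl⟩ := hval z v h; exact ⟨hx.1, hx.2, hu.1, hu.2⟩
  · intro z w v h1 h2; obtain ⟨rfl, -⟩ := hval z v h1; obtain ⟨rfl, -⟩ := hval w v h2; rfl
  · intro z w v v' h1 h2
    obtain ⟨rfl, rfl⟩ := hval z v h1; obtain ⟨rfl, rfl⟩ := hval w v' h2
    unfold cycDist; omega
  · intro t a hmono hdom hsurj
    have ht : t ≤ 2 := by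
      by_contra h
      have h0 : a 0 = x := by
        have := hdom 0 (by omega); unfold enc1 at this
        by_contra h'; rw [if_neg h'] at this; exact this rfl
      have h1 : a 1 = x := by
        have := hdom 1 (by omega); unfold enc1 at this
        by_contra h'; rw [if_neg h'] at this; exact this rfl
      have := hmono 0 1 (by omega) (by omega)
      omega
    exact orient_small _ t a ht

lemma mem2 {n c : ℕ} {D : Finset ℕ} (hc : c < n) (hD : D ⊆ Icc 1 n) :
    IsPartialIsometry n (enc2 n c D) ∧ IsOrientPres (enc2 n c D) := by
  have hval : ∀ z v, enc2 n c D z = some v → z ∈ D ∧ v = rotF n c z := by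
    intro z v h
    unfold enc2 at h
    split_ifs at h with h'
    exact ⟨h', (Option.some_inj.1 h).symm⟩
  have hbd : ∀ z, z ∈ D → 1 ≤ z ∧ z ≤ n := by
    intro z hz; have := hD hz; simp [mem_Icc] at this; exact this
  refine ⟨⟨?_, ?_, ?_⟩, ?_⟩
  · intro z v h; obtain ⟨hz, rfl⟩ := hval z v h
    obtain ⟨h1, h2⟩ := hbd z hz
    obtain ⟨h3, h4⟩ := rotF_bound hc (hbd z hz)
    exact ⟨h1, h2, h3, h4⟩
  · intro z w v h1 h2
    obtain ⟨hz, rfl⟩ := hval z v h1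
    obtain ⟨hw, he⟩ := hval w _ h2
    exact rotF_inj hc (hbd z hz) (hbd w hw) he
  · intro z w v v' h1 h2
    obtain ⟨hz, rfl⟩ := hval z v h1
    obtain ⟨hw, rfl⟩ := hval w v' h2
    exact rotF_iso hc (hbd z hz) (hbd w hw)
  · intro t a hmono hdom hsurj
    have hmem : ∀ p, p < t → a p ∈ D := by
      intro p hp
      have := hdom p hp; unfold enc2 at this
      by_contra h'; rw [if_neg h'] at this; exact this rfl
    have heq : ∀ p ∈ Finset.range t,
        ((enc2 n c D (a ((p + 1) % t))).getD 0 < (enc2 n c D (a p)).getD 0 ↔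
          rotF n c (a ((p + 1) % t)) < rotF n c (a p)) := by
      intro p hp
      rw [mem_range] at hp
      have h1 : a p ∈ D := hmem p hp
      have h2 : a ((p + 1) % t) ∈ D := hmem _ (Nat.mod_lt _ (by omega))
      unfold enc2
      rw [if_pos h1, if_pos h2]
      simp
    rw [Finset.filter_congr heq]
    exact rot_orient t a hmono (fun p hp => hbd _ (hmem p hp))

lemma mem3 {n s x y : ℕ} (hs : s < n) (hx : 1 ≤ x ∧ x ≤ n) (hy : 1 ≤ y ∧ y ≤ n)
    (hxy : x ≠ y) :
    IsPartialIsometry n (enc3 n s x y) ∧ IsOrientPres (enc3 n s x y) := by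
  have hval : ∀ z v, enc3 n s x y z = some v → (z = x ∨ z = y) ∧ v = reflF n s z := by
    intro z v h
    unfold enc3 at h
    split_ifs at h with h'
    exact ⟨h', (Option.some_inj.1 h).symm⟩
  have hbd : ∀ z, (z = x ∨ z = y) → 1 ≤ z ∧ z ≤ n := by
    rintro z (rfl | rfl); exact hx; exact hy
  refine ⟨⟨?_, ?_, ?_⟩, ?_⟩
  · intro z v h; obtain ⟨hz, rfl⟩ := hval z v h
    obtain ⟨h1, h2⟩ := hbd z hz
    obtain ⟨h3, h4⟩ := reflF_bound hs (hbd z hz)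
    exact ⟨h1, h2, h3, h4⟩
  · intro z w v h1 h2
    obtain ⟨hz, rfl⟩ := hval z v h1
    obtain ⟨hw, he⟩ := hval w _ h2
    exact reflF_inj hs (hbd z hz) (hbd w hw) he
  · intro z w v v' h1 h2
    obtain ⟨hz, rfl⟩ := hval z v h1
    obtain ⟨hw, rfl⟩ := hval w v' h2
    exact reflF_iso hs (hbd z hz) (hbd w hw)
  · intro t a hmono hdom hsurj
    have hmem : ∀ p, p < t → a p = x ∨ a p = y := by
      intro p hp
      have := hdom p hp; unfold enc3 at this
      by_contra h'; rw [if_neg h'] at this; exact this rfl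
    have ht : t ≤ 2 := by
      by_contra h
      have h0 := hmem 0 (by omega)
      have h1 := hmem 1 (by omega)
      have h2 := hmem 2 (by omega)
      have m1 := hmono 0 1 (by omega) (by omega)
      have m2 := hmono 1 2 (by omega) (by omega)
      omega
    exact orient_small _ t a ht

lemma classify {n : ℕ} (hn : 3 ≤ n) (α : ℕ → Option ℕ)
    (h : IsPartialIsometry n α ∧ IsOrientPres α) :
    α = enc0 ∨
    (∃ x u, (1 ≤ x ∧ x ≤ n) ∧ (1 ≤ u ∧ u ≤ n) ∧ α = enc1 x u) ∨
    (∃ c D, c < n ∧ D ⊆ Icc 1 n ∧ 2 ≤ D.card ∧ α = enc2 n c D) ∨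
    (∃ s x y, s < n ∧ 1 ≤ x ∧ x < y ∧ y ≤ n ∧ 2 * (y - x) ≠ n ∧ α = enc3 n s x y) := by
  classical
  haveI : NeZero n := ⟨by omega⟩
  set D : Finset ℕ := (Icc 1 n).filter (fun z => α z ≠ none) with hDdef
  have hdomiff : ∀ z, α z ≠ none ↔ z ∈ D := by
    intro z
    constructor
    · intro hz
      rw [hDdef, mem_filter, mem_Icc]
      obtain ⟨u, hu⟩ := Option.ne_none_iff_exists'.1 hz
      have := h.1.1 z u hu
      exact ⟨⟨this.1, this.2.1⟩, hz⟩
    · intro hz; rw [hDdef, mem_filter] at hz; exact hz.2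
  set f : ℕ → ℕ := fun z => (α z).getD 0 with hfdef
  have hsome : ∀ z ∈ D, α z = some (f z) := by
    intro z hz
    obtain ⟨u, hu⟩ := Option.ne_none_iff_exists'.1 ((hdomiff z).2 hz)
    show α z = some ((α z).getD 0)
    rw [hu]; rfl
  have hfb : ∀ z ∈ D, 1 ≤ f z ∧ f z ≤ n := by
    intro z hz
    have := h.1.1 z (f z) (hsome z hz)
    exact ⟨this.2.2.1, this.2.2.2⟩
  have hzb : ∀ z ∈ D, 1 ≤ z ∧ z ≤ n := by
    intro z hz
    have := h.1.1 z (f z) (hsome z hz)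
    exact ⟨this.1, this.2.1⟩
  set g : ℕ → ZMod n := fun z => ((f z : ℕ) : ZMod n) with hgdef
  have hg : ∀ x ∈ D, ∀ y ∈ D, g y - g x = (y : ZMod n) - x ∨ g y - g x = (x : ZMod n) - y := by
    intro x hx y hy
    exact dist_dir (hzb x hx) (hzb y hy) (hfb x hx) (hfb y hy)
      (h.1.2.2 x y (f x) (f y) (hsome x hx) (hsome y hy))
  have hnone : ∀ z, z ∉ D → α z = none := by
    intro z hz
    by_contra h'
    exact hz ((hdomiff z).1 h')
  -- rotation case helper
  have rotcase : ∀ x0 ∈ D, 2 ≤ D.card → (∀ z ∈ D, g z = g x0 + ((z : ZMod n) - x0)) →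
      (∃ c Dd, c < n ∧ Dd ⊆ Icc 1 n ∧ 2 ≤ Dd.card ∧ α = enc2 n c Dd) := by
    intro x0 hx0 hcard hform
    set c : ℕ := (g x0 - (x0 : ZMod n)).val with hcdef
    have hc : c < n := ZMod.val_lt _
    have hccast : ((c : ℕ) : ZMod n) = g x0 - (x0 : ZMod n) := by
      rw [hcdef, ZMod.natCast_val, ZMod.cast_id]
    refine ⟨c, D, hc, fun z hz => mem_filter.1 hz |>.1, hcard, ?_⟩
    funext z
    by_cases hz : z ∈ D
    · rw [hsome z hz]
      unfold enc2
      rw [if_pos hz]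
      congr 1
      apply val_inj_pts (by omega) (hfb z hz) (rotF_bound hc (hzb z hz))
      rw [rotF_cast (hzb z hz), hccast,
        show ((f z : ℕ) : ZMod n) = g z from rfl, hform z hz]
      ring
    · rw [hnone z hz]; unfold enc2; rw [if_neg hz]
  rcases Nat.lt_or_ge D.card 2 with hsmall | hbig
  · rcases Nat.lt_or_ge D.card 1 with h0 | h1
    · left
      have hD0 : D = ∅ := Finset.card_eq_zero.1 (by omega)
      funext z
      exact hnone z (by rw [hD0]; exact notMem_empty z)
    · right; left
      obtain ⟨x, hDx⟩ := Finset.card_eq_one.1 (show D.card = 1 by omega)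
      have hxD : x ∈ D := by rw [hDx]; exact mem_singleton_self x
      refine ⟨x, f x, hzb x hxD, hfb x hxD, ?_⟩
      funext z
      by_cases hz : z = x
      · subst hz; rw [hsome z hxD]; unfold enc1; rw [if_pos rfl]
      · rw [hnone z (by rw [hDx]; simpa using hz)]; unfold enc1; rw [if_neg hz]
  · by_cases hex : ∃ x ∈ D, ∃ y ∈ D, 2 * ((y : ZMod n) - x) ≠ 0
    · obtain ⟨x, hx, y, hy, h2⟩ := hex
      rcases rigid hg hx hy h2 with hform | hform
      · exact Or.inr (Or.inr (Or.inl (rotcase x hx hbig hform)))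
      · -- reflection form
        have hxy : x ≠ y := by
          intro he; subst he; simp at h2
        have hfz : ∃ s, s < n ∧ ∀ z ∈ D, f z = reflF n s z := by
          refine ⟨(g x + (x : ZMod n) - 2).val, ZMod.val_lt _, ?_⟩
          intro z hz
          have hscast : (((g x + (x : ZMod n) - 2).val : ℕ) : ZMod n)
              = g x + (x : ZMod n) - 2 := by rw [ZMod.natCast_val, ZMod.cast_id]
          apply val_inj_pts (by omega : (0:ℕ) < n) (hfb z hz)
            (reflF_bound (ZMod.val_lt _) (hzb z hz))
          rw [reflF_cast (hzb z hz), hscast,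
            show ((f z : ℕ) : ZMod n) = g z from rfl, hform z hz]
          ring
        obtain ⟨s, hs, hfz⟩ := hfz
        rcases Nat.lt_or_ge D.card 3 with hc2 | hc3
        · -- rank two: enc3
          right; right; right
          have hcard2 : D.card = 2 := by omega
          obtain ⟨a, b, hab, hD2⟩ := Finset.card_eq_two.1 hcard2
          have key : ∀ a' b' : ℕ, a' < b' → D = {a', b'} →
              ∃ s' x' y', s' < n ∧ 1 ≤ x' ∧ x' < y' ∧ y' ≤ n ∧ 2 * (y' - x') ≠ n ∧
                α = enc3 n s' x' y' := by
            intro a b hlt hD2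
            have haD : a ∈ D := by rw [hD2]; simp
            have hbD : b ∈ D := by rw [hD2]; simp
            refine ⟨s, a, b, hs, (hzb a haD).1, hlt, (hzb b hbD).2, ?_, ?_⟩
            · intro hanti
              have hcast0 : 2 * ((b : ZMod n) - a) = 0 := by
                have h5 : ((2 * (b - a) : ℕ) : ZMod n) = ((n : ℕ) : ZMod n) := by rw [hanti]
                rw [ZMod.natCast_self] at h5
                rw [← h5]
                push_cast [Nat.cast_sub (le_of_lt hlt)]
                ring
              have hxab : x = a ∨ x = b := by rw [hD2] at hx; simpa using hx
              have hyab : y = a ∨ y = b := by rw [hD2] at hy; simpa using hy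
              rcases hxab with rfl | rfl <;> rcases hyab with rfl | rfl
              · exact hxy rfl
              · exact h2 hcast0
              · exact h2 (by linear_combination -hcast0)
              · exact hxy rfl
            · funext z
              by_cases hz : z ∈ D
              · rw [hsome z hz]
                unfold enc3
                rw [if_pos (by rw [hD2] at hz; simpa using hz), hfz z hz]
              · rw [hnone z hz]; unfold enc3
                rw [if_neg (by rw [hD2] at hz; simpa using hz)]
          rcases lt_or_gt_of_ne hab with hlt | hgt
          · exact key a b hlt hD2
          · exact key b a hgt (by rw [hD2]; ext z; simp; tauto)
        · -- rank ≥ 3 : contradiction with orientation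
          exfalso
          obtain ⟨a, hmono, hmem, hsurj⟩ := sorted_enum D
          have hungood := h.2 D.card a hmono
            (fun p hp => (hdomiff (a p)).2 (hmem p hp))
            (fun z hz => hsurj z ((hdomiff z).1 hz))
          have heq : ∀ p ∈ Finset.range D.card,
              ((α (a ((p + 1) % D.card))).getD 0 < (α (a p)).getD 0 ↔
                reflF n s (a ((p + 1) % D.card)) < reflF n s (a p)) := by
            intro p hp
            rw [mem_range] at hp
            have h1 : a p ∈ D := hmem p hp
            have h2' : a ((p + 1) % D.card) ∈ D := hmem _ (Nat.mod_lt _ (by omega))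
            rw [show (α (a p)).getD 0 = f (a p) from rfl,
              show (α (a ((p + 1) % D.card))).getD 0 = f (a ((p + 1) % D.card)) from rfl,
              hfz _ h1, hfz _ h2']
          rw [Finset.filter_congr heq] at hungood
          have := refl_bad (n := n) (s := s) D.card a hc3 hmono (fun p hp => hzb _ (hmem p hp))
          omega
    · -- all pairs antipodal/equal: rotation form
      push_neg at hex
      obtain ⟨x0, hx0⟩ := Finset.card_pos.1 (by omega : 0 < D.card)
      refine Or.inr (Or.inr (Or.inl (rotcase x0 hx0 hbig ?_)))
      intro z hz
      rcases hg x0 hx0 z hz with h1 | h1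
      · linear_combination h1
      · have h2 := hex x0 hx0 z hz
        linear_combination h1 - h2

-- value characterizations
lemma enc1_val {x u z v : ℕ} (h : enc1 x u z = some v) : z = x ∧ v = u := by
  unfold enc1 at h; split_ifs at h with h'
  exact ⟨h', (Option.some_inj.1 h).symm⟩

lemma enc2_val {n c z v : ℕ} {D : Finset ℕ} (h : enc2 n c D z = some v) :
    z ∈ D ∧ v = rotF n c z := by
  unfold enc2 at h; split_ifs at h with h'
  exact ⟨h', (Option.some_inj.1 h).symm⟩

lemma enc3_val {n s x y z v : ℕ} (h : enc3 n s x y z = some v) :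
    (z = x ∨ z = y) ∧ v = reflF n s z := by
  unfold enc3 at h; split_ifs at h with h'
  exact ⟨h', (Option.some_inj.1 h).symm⟩

lemma enc2_none {n c z : ℕ} {D : Finset ℕ} (h : z ∉ D) : enc2 n c D z = none := by
  unfold enc2; rw [if_neg h]

theorem stmt16 (n : ℕ) (hn : 3 ≤ n) :
    (({α : ℕ → Option ℕ | IsPartialIsometry n α ∧ IsOrientPres α}.ncard : ℤ)) =
      (n : ℤ) * 2 ^ n + (n : ℤ) ^ 2 * (n - 1) / 2 -
        (1 + (-1) ^ n) * (n : ℤ) ^ 2 / 4 - n + 1 := by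
  classical
  set E0 : Finset (ℕ → Option ℕ) := {enc0} with hE0def
  set E1 : Finset (ℕ → Option ℕ) :=
    (Icc 1 n ×ˢ Icc 1 n).image (fun p => enc1 p.1 p.2) with hE1def
  set I2 : Finset (ℕ × Finset ℕ) :=
    (range n) ×ˢ ((Icc 1 n).powerset.filter fun D => 2 ≤ D.card) with hI2def
  set E2 : Finset (ℕ → Option ℕ) := I2.image (fun p => enc2 n p.1 p.2) with hE2def
  set I3 : Finset (ℕ × (ℕ × ℕ)) :=
    (range n) ×ˢ ((Icc 1 n ×ˢ Icc 1 n).filter fun q => q.1 < q.2 ∧ 2 * (q.2 - q.1) ≠ n)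
    with hI3def
  set E3 : Finset (ℕ → Option ℕ) := I3.image (fun p => enc3 n p.1 p.2.1 p.2.2) with hE3def
  -- the set equality
  have hset : {α : ℕ → Option ℕ | IsPartialIsometry n α ∧ IsOrientPres α}
      = ↑(((E0 ∪ E1) ∪ E2) ∪ E3) := by
    ext α
    simp only [Set.mem_setOf_eq, coe_union, Set.mem_union, mem_coe]
    constructor
    · intro hα
      rcases classify hn α hα with h0 | ⟨x, u, hx, hu, he⟩ | ⟨c, D, hc, hD, hcard, he⟩ |
          ⟨s, x, y, hs, h1, h2, h3, h4, he⟩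
      · exact Or.inl (Or.inl (Or.inl (by rw [hE0def, h0]; exact mem_singleton_self _)))
      · refine Or.inl (Or.inl (Or.inr (mem_image.2 ⟨(x, u), ?_, he.symm⟩)))
        simp only [mem_product, mem_Icc]
        exact ⟨hx, hu⟩
      · refine Or.inl (Or.inr (mem_image.2 ⟨(c, D), ?_, he.symm⟩))
        rw [hI2def]
        simp only [mem_product, mem_range, mem_filter, mem_powerset]
        exact ⟨hc, hD, hcard⟩
      · refine Or.inr (mem_image.2 ⟨(s, x, y), ?_, he.symm⟩)
        rw [hI3def]
        simp only [mem_product, mem_range, mem_filter, mem_Icc]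
        exact ⟨hs, ⟨⟨h1, by omega⟩, ⟨by omega, h3⟩⟩, h2, h4⟩
    · rintro (((h | h) | h) | h)
      · rw [hE0def, mem_singleton] at h
        rw [h]; exact mem0 n
      · rw [hE1def] at h
        obtain ⟨⟨x, u⟩, hmem, he⟩ := mem_image.1 h
        rw [mem_product, mem_Icc, mem_Icc] at hmem
        rw [← he]; exact mem1 hmem.1 hmem.2
      · rw [hE2def] at h
        obtain ⟨⟨c, D⟩, hmem, he⟩ := mem_image.1 h
        rw [hI2def, mem_product, mem_range, mem_filter, mem_powerset] at hmem
        rw [← he]; exact mem2 hmem.1 hmem.2.1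
      · rw [hE3def] at h
        obtain ⟨⟨s, x, y⟩, hmem, he⟩ := mem_image.1 h
        rw [hI3def, mem_product, mem_range, mem_filter, mem_product, mem_Icc, mem_Icc] at hmem
        rw [← he]
        exact mem3 hmem.1 ⟨hmem.2.1.1.1, hmem.2.1.1.2⟩ ⟨hmem.2.1.2.1, hmem.2.1.2.2⟩
          (by have := hmem.2.2.1; omega)
  rw [hset, Set.ncard_coe_finset]
  -- basic index-card facts
  have hIcc : (Icc 1 n).card = n := by rw [Nat.card_Icc]; omega
  -- disjointness
  have hd01 : Disjoint E0 E1 := by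
    rw [Finset.disjoint_left]
    intro b h0 h1
    rw [hE0def, mem_singleton] at h0
    obtain ⟨⟨x, u⟩, hmem, he⟩ := mem_image.1 h1
    subst h0
    have := congrFun he x
    simp [enc0, enc1] at this
  have hd02 : Disjoint E0 E2 := by
    rw [Finset.disjoint_left]
    intro b h0 h2
    rw [hE0def, mem_singleton] at h0
    obtain ⟨⟨c, D⟩, hmem, he⟩ := mem_image.1 h2
    rw [hI2def, mem_product, mem_filter] at hmem
    obtain ⟨z, hz⟩ := Finset.card_pos.1
      (show 0 < D.card by have h9 : 2 ≤ D.card := hmem.2.2; omega)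
    subst h0
    have := congrFun he z
    simp [enc0, enc2, hz] at this
  have hd03 : Disjoint E0 E3 := by
    rw [Finset.disjoint_left]
    intro b h0 h3
    rw [hE0def, mem_singleton] at h0
    obtain ⟨⟨s, x, y⟩, hmem, he⟩ := mem_image.1 h3
    subst h0
    have := congrFun he x
    simp [enc0, enc3] at this
  have hd12 : Disjoint E1 E2 := by
    rw [Finset.disjoint_left]
    intro b h1 h2
    obtain ⟨⟨x, u⟩, hmem1, he1⟩ := mem_image.1 h1
    obtain ⟨⟨c, D⟩, hmem, he⟩ := mem_image.1 h2
    rw [hI2def, mem_product, mem_filter] at hmem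
    obtain ⟨z, hz, w, hw, hzw⟩ := Finset.one_lt_card.1
      (show 1 < D.card by have h9 : 2 ≤ D.card := hmem.2.2; omega)
    have he1' : enc1 x u = b := he1
    have he' : enc2 n c D = b := he
    have hez : enc1 x u z = some (rotF n c z) := by
      rw [he1', ← he']; simp [enc2, hz]
    have hew : enc1 x u w = some (rotF n c w) := by
      rw [he1', ← he']; simp [enc2, hw]
    exact hzw ((enc1_val hez).1.trans (enc1_val hew).1.symm)
  have hd13 : Disjoint E1 E3 := by
    rw [Finset.disjoint_left]
    intro b h1 h3
    obtain ⟨⟨x, u⟩, hmem1, he1⟩ := mem_image.1 h1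
    obtain ⟨⟨s, p, q⟩, hmem, he⟩ := mem_image.1 h3
    rw [hI3def, mem_product, mem_filter] at hmem
    have hpq : p < q := hmem.2.2.1
    have he1' : enc1 x u = b := he1
    have he' : enc3 n s p q = b := he
    have hep : enc1 x u p = some (reflF n s p) := by
      rw [he1', ← he']; simp [enc3]
    have heq' : enc1 x u q = some (reflF n s q) := by
      rw [he1', ← he']; simp [enc3]
    have := (enc1_val hep).1.trans (enc1_val heq').1.symm
    omega
  have hd23 : Disjoint E2 E3 := by
    rw [Finset.disjoint_left]
    intro b h2 h3
    obtain ⟨⟨c, D⟩, hmem2, he2⟩ := mem_image.1 h2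
    obtain ⟨⟨s, p, q⟩, hmem, he⟩ := mem_image.1 h3
    rw [hI2def, mem_product, mem_range, mem_filter, mem_powerset] at hmem2
    rw [hI3def, mem_product, mem_range, mem_filter, mem_product, mem_Icc, mem_Icc] at hmem
    have he2' : enc2 n c D = b := he2
    have he' : enc3 n s p q = b := he
    have hfeq : enc2 n c D = enc3 n s p q := by rw [he2', ← he']
    have hpD : p ∈ D := by
      by_contra h'
      have := congrFun hfeq p
      simp [enc2, enc3, h'] at this
    have hqD : q ∈ D := by
      by_contra h'
      have := congrFun hfeq q
      simp [enc2, enc3, h'] at this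
    have hvp : rotF n c p = reflF n s p := by
      have := congrFun hfeq p
      simp [enc2, enc3, hpD] at this
      exact this
    have hvq : rotF n c q = reflF n s q := by
      have := congrFun hfeq q
      simp [enc2, enc3, hqD] at this
      exact this
    exact hmem.2.2.2 (rot_ne_refl hmem2.1 hmem.1 hmem.2.1.1.1 hmem.2.2.1 hmem.2.1.2.2 hvp hvq)
  -- cardinalities
  have hcard : (((E0 ∪ E1) ∪ E2) ∪ E3).card = E0.card + E1.card + E2.card + E3.card := by
    rw [Finset.card_union_of_disjoint (by
        rw [disjoint_union_left, disjoint_union_left]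
        exact ⟨⟨hd03, hd13⟩, hd23⟩),
      Finset.card_union_of_disjoint (by
        rw [disjoint_union_left]
        exact ⟨hd02, hd12⟩),
      Finset.card_union_of_disjoint hd01]
  have hE0c : E0.card = 1 := by rw [hE0def]; exact card_singleton _
  have hE1c : E1.card = n * n := by
    rw [hE1def, card_image_of_injOn, card_product, hIcc]
    intro pq hpq rs hrs he
    have he' : enc1 pq.1 pq.2 = enc1 rs.1 rs.2 := he
    have h1 : enc1 rs.1 rs.2 pq.1 = some pq.2 := by rw [← he']; simp [enc1]
    obtain ⟨e1, e2⟩ := enc1_val h1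
    exact Prod.ext e1 e2
  have hFc : ((Icc 1 n).powerset.filter fun D => 2 ≤ D.card).card = 2 ^ n - n - 1 := by
    have htot := Finset.card_filter_add_card_filter_not
      (s := (Icc 1 n).powerset) (p := fun D => 2 ≤ D.card)
    rw [Finset.card_powerset, hIcc] at htot
    have hsplit : ((Icc 1 n).powerset.filter fun D => ¬ 2 ≤ D.card)
        = ((Icc 1 n).powerset.filter fun D => D.card = 0)
          ∪ ((Icc 1 n).powerset.filter fun D => D.card = 1) := by
      rw [← filter_or]
      apply filter_congr
      intro D hD
      constructor
      · intro h'; omega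
      · intro h'; omega
    have hneg : ((Icc 1 n).powerset.filter fun D => ¬ 2 ≤ D.card).card = 1 + n := by
      rw [hsplit, Finset.card_union_of_disjoint (by
        rw [Finset.disjoint_left]
        intro D hD1 hD2
        rw [mem_filter] at hD1 hD2
        omega)]
      rw [← Finset.powersetCard_eq_filter, ← Finset.powersetCard_eq_filter,
        Finset.card_powersetCard, Finset.card_powersetCard, hIcc]
      rw [Nat.choose_zero_right, Nat.choose_one_right]
    have h2n : n < 2 ^ n := Nat.lt_two_pow_self
    omega
  have hE2c : E2.card = n * (2 ^ n - n - 1) := by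
    rw [hE2def, card_image_of_injOn, hI2def, card_product, card_range, hFc]
    intro pq hpq rs hrs he
    simp only [hI2def, coe_product, Set.mem_prod, mem_coe, mem_range, mem_filter,
      mem_powerset] at hpq hrs
    have he' : enc2 n pq.1 pq.2 = enc2 n rs.1 rs.2 := he
    have hDD : pq.2 = rs.2 := by
      ext z
      constructor
      · intro hz
        have h1 : enc2 n rs.1 rs.2 z = some (rotF n pq.1 z) := by rw [← he']; simp [enc2, hz]
        exact (enc2_val h1).1
      · intro hz
        have h1 : enc2 n pq.1 pq.2 z = some (rotF n rs.1 z) := by rw [he']; simp [enc2, hz]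
        exact (enc2_val h1).1
    obtain ⟨z, hz⟩ := Finset.card_pos.1 (show 0 < pq.2.card by have h9 := hpq.2.2; omega)
    have h1 : enc2 n rs.1 rs.2 z = some (rotF n pq.1 z) := by rw [← he']; simp [enc2, hz]
    have h2 : rotF n pq.1 z = rotF n rs.1 z := by
      have := (enc2_val h1).2; omega
    have hzb : 1 ≤ z ∧ z ≤ n := by
      have := hpq.2.1 hz; rw [mem_Icc] at this; exact this
    exact Prod.ext (rot_param_inj hpq.1 hrs.1 hzb h2) hDD
  have hE3c : E3.card = n * ((Icc 1 n ×ˢ Icc 1 n).filter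
      fun q => q.1 < q.2 ∧ 2 * (q.2 - q.1) ≠ n).card := by
    rw [hE3def, card_image_of_injOn, hI3def, card_product, card_range]
    intro pq hpq rs hrs he
    simp only [hI3def, coe_product, Set.mem_prod, mem_coe, mem_range, mem_filter,
      mem_product, mem_Icc] at hpq hrs
    obtain ⟨hs1, ⟨⟨hx1, hx2⟩, hy1, hy2⟩, hlt, hna⟩ := hpq
    obtain ⟨hs1', ⟨⟨hx1', hx2'⟩, hy1', hy2'⟩, hlt', hna'⟩ := hrs
    have he' : enc3 n pq.1 pq.2.1 pq.2.2 = enc3 n rs.1 rs.2.1 rs.2.2 := he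
    have m1 : pq.2.1 = rs.2.1 ∨ pq.2.1 = rs.2.2 := by
      have h1 : enc3 n rs.1 rs.2.1 rs.2.2 pq.2.1 = some (reflF n pq.1 pq.2.1) := by
        rw [← he']; simp [enc3]
      exact (enc3_val h1).1
    have m2 : pq.2.2 = rs.2.1 ∨ pq.2.2 = rs.2.2 := by
      have h1 : enc3 n rs.1 rs.2.1 rs.2.2 pq.2.2 = some (reflF n pq.1 pq.2.2) := by
        rw [← he']; simp [enc3]
      exact (enc3_val h1).1
    have m3 : rs.2.1 = pq.2.1 ∨ rs.2.1 = pq.2.2 := by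
      have h1 : enc3 n pq.1 pq.2.1 pq.2.2 rs.2.1 = some (reflF n rs.1 rs.2.1) := by
        rw [he']; simp [enc3]
      exact (enc3_val h1).1
    have hxx : pq.2.1 = rs.2.1 ∧ pq.2.2 = rs.2.2 := by omega
    have h1 : enc3 n rs.1 rs.2.1 rs.2.2 pq.2.1 = some (reflF n pq.1 pq.2.1) := by
      rw [← he']; simp [enc3]
    have h2 : reflF n pq.1 pq.2.1 = reflF n rs.1 pq.2.1 := (enc3_val h1).2
    have hs : pq.1 = rs.1 := refl_param_inj hs1 hs1' ⟨hx1, hx2⟩ h2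
    exact Prod.ext hs (Prod.ext hxx.1 hxx.2)
  -- pair counting
  set SQ := Icc 1 n ×ˢ Icc 1 n with hSQdef
  set L := SQ.filter (fun q => q.1 < q.2) with hLdef
  set A := SQ.filter (fun q => q.1 < q.2 ∧ 2 * (q.2 - q.1) = n) with hAdef
  have hsub : A ⊆ L := by
    intro q hq
    rw [hAdef, mem_filter] at hq
    rw [hLdef, mem_filter]
    exact ⟨hq.1, hq.2.1⟩
  have hPsd : (SQ.filter fun q => q.1 < q.2 ∧ 2 * (q.2 - q.1) ≠ n) = L \ A := by
    ext q
    rw [mem_sdiff, hLdef, hAdef, mem_filter, mem_filter, mem_filter]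
    tauto
  have hPc : (SQ.filter fun q => q.1 < q.2 ∧ 2 * (q.2 - q.1) ≠ n).card = L.card - A.card := by
    rw [hPsd, card_sdiff_of_subset hsub]
  have hG : (SQ.filter fun q => q.2 < q.1) = L.image (fun q => (q.2, q.1)) := by
    ext q
    simp only [hLdef, hSQdef, mem_image, mem_filter, mem_product, mem_Icc]
    constructor
    · rintro ⟨⟨⟨h1, h2⟩, h3, h4⟩, h5⟩
      exact ⟨(q.2, q.1), ⟨⟨⟨h3, h4⟩, h1, h2⟩, h5⟩, rfl⟩
    · rintro ⟨r, ⟨⟨⟨h1, h2⟩, h3, h4⟩, h5⟩, he⟩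
      rw [← he]
      exact ⟨⟨⟨h3, h4⟩, h1, h2⟩, h5⟩
  have hGc : (SQ.filter fun q => q.2 < q.1).card = L.card := by
    rw [hG, card_image_of_injOn]
    intro a ha b hb he
    have h1 := Prod.ext_iff.1 he
    exact Prod.ext h1.2 h1.1
  have hDgc : (SQ.filter fun q => q.1 = q.2).card = n := by
    have himg : (SQ.filter fun q => q.1 = q.2) = (Icc 1 n).image (fun x => (x, x)) := by
      ext q
      simp only [hSQdef, mem_image, mem_filter, mem_product, mem_Icc]
      constructor
      · rintro ⟨⟨⟨h1, h2⟩, h3, h4⟩, h5⟩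
        exact ⟨q.1, ⟨h1, h2⟩, Prod.ext rfl h5⟩
      · rintro ⟨x, ⟨h1, h2⟩, he⟩
        rw [← he]
        exact ⟨⟨⟨h1, h2⟩, h1, h2⟩, rfl⟩
    rw [himg, card_image_of_injOn, hIcc]
    intro a ha b hb he
    exact (Prod.ext_iff.1 he).1
  have d1 : Disjoint L (SQ.filter fun q => q.2 < q.1) := by
    rw [Finset.disjoint_left]
    intro q h1 h2
    rw [hLdef, mem_filter] at h1
    rw [mem_filter] at h2
    omega
  have d2 : Disjoint (L ∪ SQ.filter fun q => q.2 < q.1) (SQ.filter fun q => q.1 = q.2) := by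
    rw [disjoint_union_left]
    constructor
    · rw [Finset.disjoint_left]
      intro q h1 h2
      rw [hLdef, mem_filter] at h1
      rw [mem_filter] at h2
      omega
    · rw [Finset.disjoint_left]
      intro q h1 h2
      rw [mem_filter] at h1 h2
      omega
  have hU : SQ = (L ∪ SQ.filter fun q => q.2 < q.1) ∪ SQ.filter fun q => q.1 = q.2 := by
    ext q
    simp only [hLdef, mem_union, mem_filter]
    constructor
    · intro hq
      rcases lt_trichotomy q.1 q.2 with h | h | h
      · exact Or.inl (Or.inl ⟨hq, h⟩)
      · exact Or.inr ⟨hq, h⟩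
      · exact Or.inl (Or.inr ⟨hq, h⟩)
    · rintro ((h | h) | h) <;> exact h.1
  have hsq : SQ.card = n * n := by rw [hSQdef, card_product, hIcc]
  have hL2 : 2 * L.card + n = n * n := by
    have := hU ▸ hsq
    rw [Finset.card_union_of_disjoint d2, Finset.card_union_of_disjoint d1] at this
    omega
  -- final arithmetic
  have h2n : n < 2 ^ n := Nat.lt_two_pow_self
  have hAL : A.card ≤ L.card := card_le_card hsub
  have hLz : 2 * (L.card : ℤ) + n = n * n := by exact_mod_cast hL2
  have hc2 : ((n * (2 ^ n - n - 1) : ℕ) : ℤ) = n * ((2 : ℤ) ^ n - n - 1) := by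
    rw [Nat.cast_mul, Nat.cast_sub (show (1 : ℕ) ≤ 2 ^ n - n by omega),
      Nat.cast_sub (show n ≤ 2 ^ n by omega)]
    push_cast
    ring
  have hc3 : ((n * (L.card - A.card) : ℕ) : ℤ) = n * ((L.card : ℤ) - A.card) := by
    rw [Nat.cast_mul, Nat.cast_sub hAL]
  rw [hcard, hE0c, hE1c, hE2c, hE3c, hPc]
  rw [Nat.cast_add, Nat.cast_add, Nat.cast_add, Nat.cast_one, Nat.cast_mul, hc2, hc3]
  have hdiv1 : (n : ℤ) ^ 2 * ((n : ℤ) - 1) / 2 = n * L.card := by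
    rw [show (n : ℤ) ^ 2 * ((n : ℤ) - 1) = 2 * ((n : ℤ) * L.card) by
      linear_combination (-(n : ℤ)) * hLz]
    exact Int.mul_ediv_cancel_left _ two_ne_zero
  rcases Nat.even_or_odd n with ⟨m, hm⟩ | ⟨m, hm⟩
  · -- even case
    have hma : (n : ℤ) = m + m := by exact_mod_cast hm
    have hneg : (-1 : ℤ) ^ n = 1 := Even.neg_one_pow ⟨m, hm⟩
    have hAc : A.card = m := by
      have hAim : A = (Icc 1 m).image (fun x => (x, x + m)) := by
        ext q
        simp only [hAdef, hSQdef, mem_image, mem_filter, mem_product, mem_Icc]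
        constructor
        · rintro ⟨⟨⟨h1, h2⟩, h3, h4⟩, h5, h6⟩
          refine ⟨q.1, ⟨h1, by omega⟩, ?_⟩
          have h7 : q.1 + m = q.2 := by omega
          rw [h7]
        · rintro ⟨x, ⟨h1, h2⟩, he⟩
          rw [← he]
          exact ⟨⟨⟨h1, by omega⟩, by omega, by omega⟩, by omega, by omega⟩
      rw [hAim, card_image_of_injOn, Nat.card_Icc]
      · omega
      · intro a ha b hb he
        exact (Prod.ext_iff.1 he).1
    have hdiv2 : (1 + (-1 : ℤ) ^ n) * (n : ℤ) ^ 2 / 4 = n * m := by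
      rw [hneg, show (1 + 1 : ℤ) * (n : ℤ) ^ 2 = 4 * ((n : ℤ) * m) by
        linear_combination (2 * (n : ℤ)) * hma]
      exact Int.mul_ediv_cancel_left _ (by norm_num)
    rw [hdiv1, hdiv2, hAc]
    push_cast
    ring
  · -- odd case
    have hneg : (-1 : ℤ) ^ n = -1 := Odd.neg_one_pow ⟨m, hm⟩
    have hAc : A.card = 0 := by
      rw [hAdef, Finset.card_eq_zero]
      rw [Finset.filter_eq_empty_iff]
      intro q hq
      rw [hSQdef, mem_product, mem_Icc, mem_Icc] at hq
      omega
    have hdiv2 : (1 + (-1 : ℤ) ^ n) * (n : ℤ) ^ 2 / 4 = 0 := by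
      rw [hneg]
      norm_num
    rw [hdiv1, hdiv2, hAc]
    push_cast
    ring
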